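/- For Hermitian positive semi-definite matrices X and Y, the matrix X∨Y = (X+Y)/2 + (X+Y)^{1/2} W^{1/2} (X+Y)^{1/2}, with W = ((X+Y)^†)^{1/2} [ (X+Y)/4 − X:Y ] ((X+Y)^†)^{1/2}, satisfies X∨Y ≤ X + Y − X:Y, with equality if and only if X:Y = 0. -/

import Mathlib

open scoped Matrix Matrix.Norms.L2Operator ComplexOrder

/-- The PSD square root of a PSD matrix, as `Matrix.PosSemidef.sqrt` was defined in Mathlib
(Dec 2024); it has since been removed from Mathlib. -/
noncomputable def Matrix.PosSemidef.sqrt {n : Type*} [Fintype n] [DecidableEq n] {𝕜 : Type*}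
    [RCLike 𝕜] {A : Matrix n n 𝕜} (hA : A.PosSemidef) : Matrix n n 𝕜 :=
  (hA.1.eigenvectorUnitary : Matrix n n 𝕜) *
    Matrix.diagonal (fun i => ((√(hA.1.eigenvalues i) : ℝ) : 𝕜)) *
    (star hA.1.eigenvectorUnitary : Matrix n n 𝕜)

/-- `MPInv A B` means `B` is the Moore-Penrose inverse of `A`. -/
def MPInv {n : ℕ} (A B : Matrix (Fin n) (Fin n) ℂ) : Prop :=
  A * B * A = A ∧ B * A * B = B ∧ (A * B).IsHermitian ∧ (B * A).IsHermitian

open scoped MatrixOrder in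
private lemma Matrix.PosSemidef.sqrt_eq_cfc' {m : Type*} [Fintype m] [DecidableEq m]
    {A : Matrix m m ℂ} (hA : A.PosSemidef) : hA.sqrt = CFC.sqrt A := by
  rw [CFC.sqrt_eq_cfc, cfc_nnreal_eq_real _ A hA.nonneg, hA.1.cfc_eq]
  simp only [Matrix.IsHermitian.cfc, Unitary.conjStarAlgAut_apply, Matrix.PosSemidef.sqrt,
    Function.comp_def]
  congr
  funext i
  rw [Real.coe_sqrt, Real.coe_toNNReal _ (hA.eigenvalues_nonneg i)]

open scoped MatrixOrder in
private lemma Matrix.PosSemidef.sqrt_mul_self {m : Type*} [Fintype m] [DecidableEq m]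
    {A : Matrix m m ℂ} (hA : A.PosSemidef) : hA.sqrt * hA.sqrt = A := by
  rw [hA.sqrt_eq_cfc']
  exact CFC.sqrt_mul_sqrt_self A hA.nonneg

open scoped MatrixOrder in
private lemma Matrix.PosSemidef.posSemidef_sqrt {m : Type*} [Fintype m] [DecidableEq m]
    {A : Matrix m m ℂ} (hA : A.PosSemidef) : hA.sqrt.PosSemidef := by
  rw [hA.sqrt_eq_cfc']
  exact Matrix.nonneg_iff_posSemidef.mp (CFC.sqrt_nonneg A)

open scoped MatrixOrder in
private lemma Matrix.PosSemidef.eq_sqrt_of_sq_eq {m : Type*} [Fintype m] [DecidableEq m]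
    {A B : Matrix m m ℂ} (hA : A.PosSemidef) (hB : B.PosSemidef) (h : A ^ 2 = B) :
    A = hB.sqrt := by
  rw [hB.sqrt_eq_cfc']
  exact (CFC.sqrt_unique (by rw [← sq, h]) hA.nonneg).symm

open scoped MatrixOrder in
private lemma Matrix.PosSemidef.eq_of_sq_eq_sq {m : Type*} [Fintype m] [DecidableEq m]
    {A B : Matrix m m ℂ} (hA : A.PosSemidef) (hB : B.PosSemidef) (h : A ^ 2 = B ^ 2) :
    A = B :=
  (CFC.sq_eq_sq_iff A B hA.nonneg hB.nonneg).mp h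


open Matrix in
private lemma mul_comm_sqrt' {m : Type*} [Fintype m] [DecidableEq m] {A B : Matrix m m ℂ}
    (hA : A.PosSemidef) (h : A * B = B * A) : hA.sqrt * B = B * hA.sqrt := by
  set U : Matrix m m ℂ := (hA.1.eigenvectorUnitary : Matrix m m ℂ) with hU
  have hU1 : star U * U = 1 := (Unitary.mem_iff.mp hA.1.eigenvectorUnitary.2).1
  have hU2 : U * star U = 1 := (Unitary.mem_iff.mp hA.1.eigenvectorUnitary.2).2
  have habs1 : ∀ X : Matrix m m ℂ, U * (star U * X) = X := fun X => by
    rw [← Matrix.mul_assoc, hU2, Matrix.one_mul]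
  have habs2 : ∀ X : Matrix m m ℂ, star U * (U * X) = X := fun X => by
    rw [← Matrix.mul_assoc, hU1, Matrix.one_mul]
  set d : m → ℂ := RCLike.ofReal ∘ hA.1.eigenvalues with hd
  set e : m → ℂ := ((↑) ∘ Real.sqrt ∘ hA.1.eigenvalues) with he
  set C : Matrix m m ℂ := star U * B * U with hC
  have hspec : A = U * diagonal d * star U := hA.1.spectral_theorem
  have hsq : hA.sqrt = U * diagonal e * star U := rfl
  have hDC : diagonal d * C = C * diagonal d := by
    have h2 : star U * (A * B) * U = star U * (B * A) * U := by rw [h]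
    rw [hspec] at h2
    calc diagonal d * C
        = star U * (U * diagonal d * star U * B) * U := by
          simp only [hC, Matrix.mul_assoc, habs1, habs2]
      _ = star U * (B * (U * diagonal d * star U)) * U := by
          simp only [← Matrix.mul_assoc]; simp only [Matrix.mul_assoc] at h2 ⊢; exact h2
      _ = C * diagonal d := by
          simp only [hC, Matrix.mul_assoc, habs1, habs2, hU1, Matrix.mul_one]
  have hEC : diagonal e * C = C * diagonal e := by
    ext i j
    have hij := congrFun (congrFun hDC i) j
    simp only [diagonal_mul, mul_diagonal] at hij ⊢
    by_cases hde : hA.1.eigenvalues i = hA.1.eigenvalues j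
    · simp only [he, Function.comp_apply, hde, mul_comm]
    · have hC0 : C i j = 0 := by
        have h0 : (d i - d j) * C i j = 0 := by
          rw [sub_mul, hij, mul_comm (C i j) (d j), sub_self]
        rcases mul_eq_zero.mp h0 with h0 | h0
        · have : (hA.1.eigenvalues i : ℂ) = hA.1.eigenvalues j := by
            have := sub_eq_zero.mp h0
            simpa [hd] using this
          exact absurd (by exact_mod_cast this) hde
        · exact h0
      simp [hC0]
  calc hA.sqrt * B
      = U * (diagonal e * C) * star U := by
        simp only [hsq, hC, Matrix.mul_assoc, habs1, habs2, hU2, Matrix.mul_one]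
    _ = U * (C * diagonal e) * star U := by rw [hEC]
    _ = B * hA.sqrt := by
        simp only [hsq, hC, Matrix.mul_assoc, habs1, habs2, hU2, Matrix.mul_one]

open Matrix in
private lemma psd_add_eq_zero' {m : Type*} [Fintype m] [DecidableEq m] {A B : Matrix m m ℂ}
    (hA : A.PosSemidef) (hB : B.PosSemidef) (h : A + B = 0) : A = 0 := by
  have hx : ∀ x : m → ℂ, A *ᵥ x = 0 := by
    intro x
    have h3 : star x ⬝ᵥ A *ᵥ x + star x ⬝ᵥ B *ᵥ x = 0 := by
      rw [← dotProduct_add, ← add_mulVec, h, zero_mulVec, dotProduct_zero]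
    have h4 : star x ⬝ᵥ A *ᵥ x = 0 :=
      ((add_eq_zero_iff_of_nonneg (hA.dotProduct_mulVec_nonneg x) (hB.dotProduct_mulVec_nonneg x)).mp h3).1
    exact (hA.dotProduct_mulVec_zero_iff x).mp h4
  ext i j
  have := congrFun (hx (Pi.single j 1)) i
  rw [mulVec_single] at this
  simpa using this

open Matrix in
private lemma mul_eq_zero_of_conj' {m : Type*} [Fintype m] [DecidableEq m]
    {A X : Matrix m m ℂ} (hX : X.PosSemidef) (h : A * X * Aᴴ = 0) : A * X = 0 := by
  have h1 : (A * hX.sqrt) * (A * hX.sqrt)ᴴ = 0 := by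
    calc (A * hX.sqrt) * (A * hX.sqrt)ᴴ
        = A * (hX.sqrt * hX.sqrt) * Aᴴ := by
          rw [conjTranspose_mul, hX.posSemidef_sqrt.1.eq]
          simp only [Matrix.mul_assoc]
      _ = 0 := by rw [hX.sqrt_mul_self, h]
  have h2 : A * hX.sqrt = 0 := self_mul_conjTranspose_eq_zero.mp h1
  calc A * X = A * hX.sqrt * hX.sqrt := by rw [Matrix.mul_assoc, hX.sqrt_mul_self]
    _ = 0 := by rw [h2, Matrix.zero_mul]

open Matrix in
private lemma psd_mul_of_commute' {m : Type*} [Fintype m] [DecidableEq m] {A B : Matrix m m ℂ}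
    (hA : A.PosSemidef) (hB : B.PosSemidef) (h : A * B = B * A) : (A * B).PosSemidef := by
  have hcs : hB.sqrt * A = A * hB.sqrt := mul_comm_sqrt' hB h.symm
  have key : A * B = hB.sqrt * A * hB.sqrtᴴ := by
    rw [hB.posSemidef_sqrt.1.eq, hcs, Matrix.mul_assoc, hB.sqrt_mul_self]
  rw [key]
  exact hA.mul_mul_conjTranspose_same hB.sqrt

/-- X∨Y ≤ X + Y - X:Y, with equality iff X:Y = 0. -/
theorem sup_le_C_iff {n : ℕ} (X Y Sd Sdh Wh : Matrix (Fin n) (Fin n) ℂ)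
    (hX : X.PosSemidef) (hY : Y.PosSemidef) (hSd : MPInv (X + Y) Sd)
    (hSdh : Sdh.PosSemidef) (hSdh2 : Sdh * Sdh = Sd)
    (hWh : Wh.PosSemidef)
    (hWh2 : Wh * Wh = Sdh * ((4 : ℂ)⁻¹ • (X + Y) - X * Sd * Y) * Sdh) :
    (X + Y - X * Sd * Y
      - ((2 : ℂ)⁻¹ • (X + Y) + (hX.add hY).sqrt * Wh * (hX.add hY).sqrt)).PosSemidef ∧
    ((2 : ℂ)⁻¹ • (X + Y) + (hX.add hY).sqrt * Wh * (hX.add hY).sqrt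
        = X + Y - X * Sd * Y ↔ X * Sd * Y = 0) := by
  set R : Matrix (Fin n) (Fin n) ℂ := (hX.add hY).sqrt with hRdef
  have hRR : R * R = X + Y := (hX.add hY).sqrt_mul_self
  have hRH : Rᴴ = R := (hX.add hY).posSemidef_sqrt.1.eq
  have hRPSD : R.PosSemidef := (hX.add hY).posSemidef_sqrt
  have hS : (X + Y).PosSemidef := hX.add hY
  have hSdPSD : Sd.PosSemidef := by
    rw [← hSdh2]
    nth_rewrite 1 [← hSdh.1.eq]
    exact Matrix.posSemidef_conjTranspose_mul_self Sdh
  have hcomm : Sd * (X + Y) = (X + Y) * Sd := by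
    calc Sd * (X + Y) = Sdᴴ * (X + Y)ᴴ := by rw [hSdPSD.1.eq, hS.1.eq]
      _ = ((X + Y) * Sd)ᴴ := (Matrix.conjTranspose_mul _ _).symm
      _ = (X + Y) * Sd := hSd.2.2.1.eq
  obtain ⟨Q, hQdef⟩ : ∃ Q : Matrix (Fin n) (Fin n) ℂ, Q = (X + Y) * Sd := ⟨_, rfl⟩
  have hQH : Qᴴ = Q := by rw [hQdef]; exact hSd.2.2.1.eq
  have hQS : Q * (X + Y) = X + Y := by rw [hQdef]; exact hSd.1
  have hSQ : (X + Y) * Q = X + Y := by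
    rw [hQdef, ← hcomm, ← Matrix.mul_assoc]
    exact hSd.1
  have hQSd : Q * Sd = Sd := by
    rw [hQdef, ← hcomm]
    exact hSd.2.1
  have hSdQ : Sd * Q = Sd := by
    rw [hQdef, ← Matrix.mul_assoc]
    exact hSd.2.1
  have hQQ : Q * Q = Q := by
    rw [hQdef, ← Matrix.mul_assoc, hSd.1]
  have hQPSD : Q.PosSemidef := by
    have : Q = Qᴴ * Q := by rw [hQH, hQQ]
    rw [this]
    exact Matrix.posSemidef_conjTranspose_mul_self Q
  -- Q absorbs R
  have hQR : Q * R = R := by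
    have hM : (Q * R - R) * (Q * R - R)ᴴ = 0 := by
      have e : (Q * R - R) * (Q * R - R)ᴴ
          = Q * (R * R) * Q - Q * (R * R) - (R * R) * Q + (R * R) := by
        rw [Matrix.conjTranspose_sub, Matrix.conjTranspose_mul, hRH, hQH]
        noncomm_ring
      rw [e, hRR, hQS, hSQ]
      abel
    have := Matrix.self_mul_conjTranspose_eq_zero.mp hM
    rwa [sub_eq_zero] at this
  have hRQ : R * Q = R := by
    have := congrArg Matrix.conjTranspose hQR
    rwa [Matrix.conjTranspose_mul, hRH, hQH] at this
  -- commutation of R with Sd and Sdh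
  have hRSd : R * Sd = Sd * R := mul_comm_sqrt' hS hcomm.symm
  have hSdhEq : Sdh = hSdPSD.sqrt := hSdh.eq_sqrt_of_sq_eq hSdPSD (by rw [sq, hSdh2])
  have hRSdh : R * Sdh = Sdh * R := by
    have h2 : hSdPSD.sqrt * R = R * hSdPSD.sqrt := mul_comm_sqrt' hSdPSD hRSd.symm
    rw [← hSdhEq] at h2
    exact h2.symm
  -- Q absorbs Sdh
  have hQSdh : Q * Sdh = Sdh := by
    have hM : (Q * Sdh - Sdh) * (Q * Sdh - Sdh)ᴴ = 0 := by
      have e : (Q * Sdh - Sdh) * (Q * Sdh - Sdh)ᴴ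
          = Q * (Sdh * Sdh) * Q - Q * (Sdh * Sdh) - (Sdh * Sdh) * Q + (Sdh * Sdh) := by
        rw [Matrix.conjTranspose_sub, Matrix.conjTranspose_mul, hSdh.1.eq, hQH]
        noncomm_ring
      rw [e, hSdh2, hQSd, hSdQ]
      abel
    have := Matrix.self_mul_conjTranspose_eq_zero.mp hM
    rwa [sub_eq_zero] at this
  have hSdhQ : Sdh * Q = Sdh := by
    have := congrArg Matrix.conjTranspose hQSdh
    rwa [Matrix.conjTranspose_mul, hSdh.1.eq, hQH] at this
  -- R * Sdh = Q
  have hT : R * Sdh = Q := by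
    have hMH : (R * Sdh)ᴴ = R * Sdh := by
      rw [Matrix.conjTranspose_mul, hSdh.1.eq, hRH, hRSdh]
    have hMM : (R * Sdh) * (R * Sdh) = Q := by
      calc R * Sdh * (R * Sdh) = R * (Sdh * R) * Sdh := by noncomm_ring
        _ = R * (R * Sdh) * Sdh := by rw [hRSdh]
        _ = (R * R) * (Sdh * Sdh) := by noncomm_ring
        _ = Q := by rw [hRR, hSdh2, ← hQdef]
    have hMPSD : (R * Sdh).PosSemidef := psd_mul_of_commute' hRPSD hSdh hRSdh
    exact hMPSD.eq_of_sq_eq_sq hQPSD (by rw [sq, sq, hMM, hQQ])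
  have hTH : Sdh * R = Q := by rw [← hRSdh, hT]
  -- Q absorbs X and Y
  have hQX : Q * X = X := by
    have hsum : (1 - Q) * X * (1 - Q)ᴴ + (1 - Q) * Y * (1 - Q)ᴴ = 0 := by
      have e : (1 - Q) * X * (1 - Q)ᴴ + (1 - Q) * Y * (1 - Q)ᴴ
          = (X + Y) - Q * (X + Y) - ((X + Y) * Q - Q * ((X + Y) * Q)) := by
        rw [Matrix.conjTranspose_sub, Matrix.conjTranspose_one, hQH]
        noncomm_ring
      rw [e, hSQ, hQS]
      abel
    have hz : (1 - Q) * X * (1 - Q)ᴴ = 0 :=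
      psd_add_eq_zero' (hX.mul_mul_conjTranspose_same (1 - Q))
        (hY.mul_mul_conjTranspose_same (1 - Q)) hsum
    have := mul_eq_zero_of_conj' hX hz
    rw [sub_mul, one_mul, sub_eq_zero] at this
    exact this.symm
  have hXQ : X * Q = X := by
    have := congrArg Matrix.conjTranspose hQX
    rwa [Matrix.conjTranspose_mul, hX.1.eq, hQH] at this
  have hQY : Q * Y = Y := by
    have hsum : (1 - Q) * Y * (1 - Q)ᴴ + (1 - Q) * X * (1 - Q)ᴴ = 0 := by
      have e : (1 - Q) * Y * (1 - Q)ᴴ + (1 - Q) * X * (1 - Q)ᴴ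
          = (X + Y) - Q * (X + Y) - ((X + Y) * Q - Q * ((X + Y) * Q)) := by
        rw [Matrix.conjTranspose_sub, Matrix.conjTranspose_one, hQH]
        noncomm_ring
      rw [e, hSQ, hQS]
      abel
    have hz : (1 - Q) * Y * (1 - Q)ᴴ = 0 :=
      psd_add_eq_zero' (hY.mul_mul_conjTranspose_same (1 - Q))
        (hX.mul_mul_conjTranspose_same (1 - Q)) hsum
    have := mul_eq_zero_of_conj' hY hz
    rw [sub_mul, one_mul, sub_eq_zero] at this
    exact this.symm
  have hYQ : Y * Q = Y := by
    have := congrArg Matrix.conjTranspose hQY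
    rwa [Matrix.conjTranspose_mul, hY.1.eq, hQH] at this
  -- P := X * Sd * Y is Hermitian, absorbed by Q
  have hXYsym : X * Sd * Y = Y * Sd * X := by
    have e1 : X * Sd * (X + Y) = X := by
      rw [Matrix.mul_assoc, hcomm, ← hQdef]
      exact hXQ
    have e2 : (X + Y) * Sd * X = X := by
      rw [show (X + Y) * Sd = Q from hQdef.symm]
      exact hQX
    have e : X * Sd * Y - Y * Sd * X = X * Sd * (X + Y) - (X + Y) * Sd * X := by
      noncomm_ring
    rw [e1, e2, sub_self] at e
    exact sub_eq_zero.mp e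
  have hPH : (X * Sd * Y)ᴴ = X * Sd * Y := by
    rw [Matrix.conjTranspose_mul, Matrix.conjTranspose_mul, hX.1.eq, hY.1.eq, hSdPSD.1.eq]
    rw [← Matrix.mul_assoc]
    exact hXYsym.symm
  have hQP : Q * (X * Sd * Y) = X * Sd * Y := by
    rw [← Matrix.mul_assoc, ← Matrix.mul_assoc, hQX]
  have hPQ : (X * Sd * Y) * Q = X * Sd * Y := by
    rw [Matrix.mul_assoc, hYQ]
  -- the key product computation
  have a1 : (R * Wh) * (Wh * R) = (4 : ℂ)⁻¹ • (X + Y) - X * Sd * Y := by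
    have e : (R * Wh) * (Wh * R) = R * (Wh * Wh) * R := by noncomm_ring
    rw [e, hWh2]
    have e2 : R * (Sdh * ((4 : ℂ)⁻¹ • (X + Y) - X * Sd * Y) * Sdh) * R
        = (R * Sdh) * ((4 : ℂ)⁻¹ • (X + Y) - X * Sd * Y) * (Sdh * R) := by
      noncomm_ring
    rw [e2, hT, hTH]
    rw [Matrix.mul_sub, Matrix.mul_smul, hQS, hQP, Matrix.sub_mul, Matrix.smul_mul, hSQ, hPQ]
  have hNH : (Wh * R - (2 : ℂ)⁻¹ • R)ᴴ = R * Wh - (2 : ℂ)⁻¹ • R := by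
    rw [Matrix.conjTranspose_sub, Matrix.conjTranspose_mul, Matrix.conjTranspose_smul,
      hRH, hWh.1.eq]
    simp
  have key : X + Y - X * Sd * Y
      - ((2 : ℂ)⁻¹ • (X + Y) + R * Wh * R)
      = (Wh * R - (2 : ℂ)⁻¹ • R)ᴴ * (Wh * R - (2 : ℂ)⁻¹ • R) := by
    rw [hNH]
    have e : (R * Wh - (2 : ℂ)⁻¹ • R) * (Wh * R - (2 : ℂ)⁻¹ • R)
        = (R * Wh) * (Wh * R) - (2 : ℂ)⁻¹ • (R * Wh * R)
          - ((2 : ℂ)⁻¹ • (R * Wh * R) - ((2 : ℂ)⁻¹ * (2 : ℂ)⁻¹) • (R * R)) := by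
      simp only [Matrix.sub_mul, Matrix.mul_sub, Matrix.smul_mul, Matrix.mul_smul, smul_smul,
        Matrix.mul_assoc]
      module
    rw [e, a1, hRR]
    have h4 : ((2 : ℂ)⁻¹ * (2 : ℂ)⁻¹) = (4 : ℂ)⁻¹ := by norm_num
    rw [h4]
    module
  refine ⟨?_, ?_, ?_⟩
  · rw [key]
    exact Matrix.posSemidef_conjTranspose_mul_self _
  · -- equality → X:Y = 0
    intro h
    have h0 : (Wh * R - (2 : ℂ)⁻¹ • R)ᴴ * (Wh * R - (2 : ℂ)⁻¹ • R) = 0 := by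
      rw [← key, h, sub_self]
    have hN0 : Wh * R - (2 : ℂ)⁻¹ • R = 0 := Matrix.conjTranspose_mul_self_eq_zero.mp h0
    have hWR : Wh * R = (2 : ℂ)⁻¹ • R := sub_eq_zero.mp hN0
    -- Wh * Q = Wh
    have hWW_Q : (Wh * Wh) * Q = Wh * Wh := by
      rw [hWh2, Matrix.mul_assoc, Matrix.mul_assoc, hSdhQ, ← Matrix.mul_assoc]
    have hQ_WW : Q * (Wh * Wh) = Wh * Wh := by
      have := congrArg Matrix.conjTranspose hWW_Q
      rwa [Matrix.conjTranspose_mul, hQH, Matrix.conjTranspose_mul, hWh.1.eq] at this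
    have hWhQ : Wh * Q = Wh := by
      have hM : (Wh * Q - Wh)ᴴ * (Wh * Q - Wh) = 0 := by
        have e : (Wh * Q - Wh)ᴴ * (Wh * Q - Wh)
            = Q * (Wh * Wh) * Q - Q * (Wh * Wh) - ((Wh * Wh) * Q - (Wh * Wh)) := by
          rw [Matrix.conjTranspose_sub, Matrix.conjTranspose_mul, hQH, hWh.1.eq]
          noncomm_ring
        rw [e, hQ_WW, hWW_Q]
        abel
      have := Matrix.conjTranspose_mul_self_eq_zero.mp hM
      rwa [sub_eq_zero] at this
    have hWhc : Wh = (2 : ℂ)⁻¹ • Q := by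
      calc Wh = Wh * Q := hWhQ.symm
        _ = Wh * (R * Sdh) := by rw [hT]
        _ = (Wh * R) * Sdh := by rw [Matrix.mul_assoc]
        _ = ((2 : ℂ)⁻¹ • R) * Sdh := by rw [hWR]
        _ = (2 : ℂ)⁻¹ • (R * Sdh) := by rw [Matrix.smul_mul]
        _ = (2 : ℂ)⁻¹ • Q := by rw [hT]
    have hSdhSSdh : Sdh * (X + Y) * Sdh = Q := by
      calc Sdh * (X + Y) * Sdh = Sdh * (R * R) * Sdh := by rw [hRR]
        _ = (Sdh * R) * (R * Sdh) := by noncomm_ring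
        _ = Q * Q := by rw [hT, hTH]
        _ = Q := hQQ
    have hP0 : Sdh * (X * Sd * Y) * Sdh = 0 := by
      have e : Sdh * ((4 : ℂ)⁻¹ • (X + Y) - X * Sd * Y) * Sdh
          = (4 : ℂ)⁻¹ • (Sdh * (X + Y) * Sdh) - Sdh * (X * Sd * Y) * Sdh := by
        rw [Matrix.mul_sub, Matrix.sub_mul, Matrix.mul_smul, Matrix.smul_mul]
      have hWWc : Wh * Wh = (4 : ℂ)⁻¹ • Q := by
        rw [hWhc, Matrix.smul_mul, Matrix.mul_smul, smul_smul, hQQ]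
        norm_num
      have := hWh2
      rw [hWWc, e, hSdhSSdh] at this
      rw [eq_sub_iff_add_eq] at this
      rw [add_comm] at this
      exact add_eq_right.mp this
    calc X * Sd * Y = Q * (X * Sd * Y) * Q := by rw [hQP, hPQ]
      _ = (R * Sdh) * (X * Sd * Y) * (Sdh * R) := by rw [hT, hTH]
      _ = R * (Sdh * (X * Sd * Y) * Sdh) * R := by noncomm_ring
      _ = 0 := by rw [hP0, Matrix.mul_zero, Matrix.zero_mul]
  · -- X:Y = 0 → equality
    intro h
    have hSdhSSdh : Sdh * (X + Y) * Sdh = Q := by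
      calc Sdh * (X + Y) * Sdh = Sdh * (R * R) * Sdh := by rw [hRR]
        _ = (Sdh * R) * (R * Sdh) := by noncomm_ring
        _ = Q * Q := by rw [hT, hTH]
        _ = Q := hQQ
    have hWWc : Wh * Wh = (4 : ℂ)⁻¹ • Q := by
      rw [hWh2, h, sub_zero, Matrix.mul_smul, Matrix.smul_mul, hSdhSSdh]
    have hQhalf : ((2 : ℂ)⁻¹ • Q).PosSemidef := by
      constructor
      · rw [Matrix.IsHermitian, Matrix.conjTranspose_smul, hQH]
        norm_num
      · intro x
        have hz := hQPSD.2 x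
        have h05 : (0 : ℂ) ≤ (2 : ℂ)⁻¹ := by
          rw [show ((2 : ℂ))⁻¹ = (((2 : ℝ)⁻¹ : ℝ) : ℂ) by push_cast; ring]
          exact_mod_cast (by norm_num : (0:ℝ) ≤ (2:ℝ)⁻¹)
        exact (hQPSD.smul h05).2 x
    have hWhc : Wh = (2 : ℂ)⁻¹ • Q := by
      apply hWh.eq_of_sq_eq_sq hQhalf
      rw [sq, sq, hWWc, Matrix.smul_mul, Matrix.mul_smul, smul_smul, hQQ]
      norm_num
    rw [h, sub_zero, hWhc]
    rw [Matrix.mul_smul, Matrix.smul_mul, hRQ, hRR]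
    module
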